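/- Let Q be a group with a finite presentation Q = ⟨q₁,…,q_m ∣ r₁,…,r_s⟩, i.e. Q is the quotient of the free group F on q₁,…,q_m by the normal closure of the words r₁,…,r_s. Let 1 → ℤ → Γ → Q → 1 be a central extension, i.e. an exact sequence of groups in which the image of ℤ is contained in the center of Γ. Then there exist integers i₁,…,i_s such that Γ is isomorphic to the presented group on generators t, q₁,…,q_m with relators [t,q_k] for 1 ≤ k ≤ m and r_j·t^{i_j} for 1 ≤ j ≤ s (each r_j regarded as a word in the generators q_k), via an isomorphism carrying t to the image in Γ of a generator of the central ℤ and inducing the identity on the quotient Q. -/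

import Mathlib

open scoped commutatorElement

/-- The relators of the presentation `⟨t, q₁, …, q_m ∣ [t,q_k] (1 ≤ k ≤ m),
r_j·t^{i_j} (1 ≤ j ≤ s)⟩`, where the generator `t` is encoded as `none` and the
generator `q_k` as `some k`, and each word `r_j` in the free group on `q₁, …, q_m`
is regarded as a word in the generators `q_k` via `FreeGroup.map some`. -/
def centralExtRels {m s : ℕ} (r : Fin s → FreeGroup (Fin m)) (i : Fin s → ℤ) :
    Set (FreeGroup (Option (Fin m))) :=
  (Set.range fun k : Fin m =>
      ⁅FreeGroup.of (none : Option (Fin m)), FreeGroup.of (some k)⁆) ∪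
  (Set.range fun j : Fin s =>
      FreeGroup.map some (r j) * FreeGroup.of (none : Option (Fin m)) ^ (i j))

/-- Let `Q = ⟨q₁,…,q_m ∣ r₁,…,r_s⟩` be a finitely presented group and let
`1 → ℤ → Γ → Q → 1` be a central extension.  Then there exist integers
`i₁,…,i_s` such that `Γ` is isomorphic to the presented group
`⟨t, q₁,…,q_m ∣ [t,q_k], r_j·t^{i_j}⟩`, via an isomorphism carrying `t` to the
image in `Γ` of a generator of the central `ℤ` and inducing the identity on `Q`
(i.e. sending each `q_k` to an element mapping to `q_k ∈ Q`). -/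
theorem central_extension_presentation {m s : ℕ} (r : Fin s → FreeGroup (Fin m))
    (Γ : Type) [Group Γ]
    (ι : Multiplicative ℤ →* Γ) (π : Γ →* PresentedGroup (Set.range r))
    (hι : Function.Injective ι) (hπ : Function.Surjective π)
    (hexact : π.ker = ι.range)
    (hcent : ∀ z : Multiplicative ℤ, ι z ∈ Subgroup.center Γ) :
    ∃ (i : Fin s → ℤ) (e : PresentedGroup (centralExtRels r i) ≃* Γ),
      (∃ u : Multiplicative ℤ,
        (u = Multiplicative.ofAdd 1 ∨ u = Multiplicative.ofAdd (-1)) ∧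
        e (PresentedGroup.of (rels := centralExtRels r i) none) = ι u) ∧
      ∀ k : Fin m,
        π (e (PresentedGroup.of (rels := centralExtRels r i) (some k))) =
          PresentedGroup.of (rels := Set.range r) k := by
  classical
  set Q := PresentedGroup (Set.range r)
  -- choose lifts of the generators
  choose g hg using fun k : Fin m => hπ (PresentedGroup.of (rels := Set.range r) k)
  set f0 : FreeGroup (Fin m) →* Γ := FreeGroup.lift g with hf0
  -- π ∘ f0 is the canonical projection
  have hπf0 : π.comp f0 = PresentedGroup.mk (Set.range r) := by
    apply FreeGroup.ext_hom
    intro a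
    simp [hf0, hg a]
    rfl
  have hπf0' : ∀ w, π (f0 w) = PresentedGroup.mk (Set.range r) w :=
    fun w => DFunLike.congr_fun hπf0 w
  -- hence f0 (r j) lies in the image of ι
  have hker : ∀ j : Fin s, f0 (r j) ∈ ι.range := by
    intro j
    rw [← hexact, MonoidHom.mem_ker, hπf0']
    exact (QuotientGroup.eq_one_iff _).mpr
      (Subgroup.subset_normalClosure (Set.mem_range_self j))
  choose z hz using hker
  refine ⟨fun j => -(z j).toAdd, ?_⟩
  set i : Fin s → ℤ := fun j => -(z j).toAdd with hi
  -- the map on generators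
  set f : Option (Fin m) → Γ := fun o => Option.elim o (ι (Multiplicative.ofAdd 1)) g with hf
  have hcomm : ∀ γ : Γ, ∀ u : Multiplicative ℤ, Commute (ι u) γ :=
    fun γ u => ((Subgroup.mem_center_iff.mp (hcent u)) γ).symm
  -- powers of ι
  have hιpow : ∀ n : ℤ, (ι (Multiplicative.ofAdd 1)) ^ n = ι (Multiplicative.ofAdd n) := by
    intro n
    rw [← map_zpow]
    congr 1
    rw [← ofAdd_zsmul, smul_eq_mul, mul_one]
  -- lift f kills the relators
  have hliftmap : (FreeGroup.lift f).comp (FreeGroup.map some) = f0 := by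
    apply FreeGroup.ext_hom
    intro a
    simp [hf, hf0]
  have hrels : ∀ w ∈ centralExtRels r i, FreeGroup.lift f w = 1 := by
    rintro w (⟨k, rfl⟩ | ⟨j, rfl⟩)
    · rw [map_commutatorElement]
      simp only [FreeGroup.lift_apply_of, hf]
      exact commutatorElement_eq_one_iff_commute.mpr (hcomm _ _)
    · rw [map_mul, map_zpow, FreeGroup.lift_apply_of]
      have h1 : FreeGroup.lift f (FreeGroup.map some (r j)) = f0 (r j) :=
        DFunLike.congr_fun hliftmap (r j)
      rw [h1, ← hz j]
      show ι (z j) * (ι (Multiplicative.ofAdd 1)) ^ (i j) = 1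
      rw [hιpow, ← map_mul]
      have : z j * Multiplicative.ofAdd (i j) = 1 := by
        simp [hi]
      rw [this, map_one]
  set ψ : PresentedGroup (centralExtRels r i) →* Γ := PresentedGroup.toGroup hrels with hψ
  have hψnone : ψ (PresentedGroup.of none) = ι (Multiplicative.ofAdd 1) :=
    PresentedGroup.toGroup.of hrels
  have hψsome : ∀ k, ψ (PresentedGroup.of (some k)) = g k :=
    fun k => PresentedGroup.toGroup.of hrels
  set G := PresentedGroup (centralExtRels r i)
  set t : G := PresentedGroup.of none with ht
  -- relators hold in G
  have hrel2 : ∀ j : Fin s,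
      PresentedGroup.mk (centralExtRels r i) (FreeGroup.map some (r j)) = t ^ (-(i j)) := by
    intro j
    have h1 : PresentedGroup.mk (centralExtRels r i)
        (FreeGroup.map some (r j) * FreeGroup.of none ^ (i j)) = 1 :=
      (QuotientGroup.eq_one_iff _).mpr
        (Subgroup.subset_normalClosure (Or.inr (Set.mem_range_self j)))
    rw [map_mul, map_zpow] at h1
    rw [zpow_neg]
    exact eq_inv_of_mul_eq_one_left h1
  -- t is central in G
  have hcommt : ∀ x : G, Commute t x := by
    intro x
    have hx : x ∈ Subgroup.centralizer {t} := by
      apply PresentedGroup.generated_by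
      intro o
      rw [Subgroup.mem_centralizer_iff]
      rintro h rfl
      cases o with
      | none => rfl
      | some k =>
        have h2 : PresentedGroup.mk (centralExtRels r i)
            ⁅FreeGroup.of (none : Option (Fin m)), FreeGroup.of (some k)⁆ = 1 :=
          (QuotientGroup.eq_one_iff _).mpr
            (Subgroup.subset_normalClosure (Or.inl (Set.mem_range_self k)))
        rw [map_commutatorElement] at h2
        exact (commutatorElement_eq_one_iff_commute.mp h2).eq
    exact Subgroup.mem_centralizer_iff.mp hx t rfl
  -- the subgroup generated by t
  set T : Subgroup G := Subgroup.zpowers t with hT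
  haveI hTn : T.Normal := by
    constructor
    rintro n ⟨k, rfl⟩ x
    have hc : Commute (t ^ k) x := (hcommt x).zpow_left k
    have : x * t ^ k * x⁻¹ = t ^ k := by
      rw [← hc.eq, mul_inv_cancel_right]
    rw [this]
    exact zpow_mem (Subgroup.mem_zpowers t) k
  -- the comparison map back from Q
  have hrelsθ : ∀ w ∈ Set.range r,
      FreeGroup.lift (fun k : Fin m =>
        QuotientGroup.mk' T (PresentedGroup.of (rels := centralExtRels r i) (some k))) w = 1 := by
    rintro w ⟨j, rfl⟩
    have hcomp : (FreeGroup.lift (fun k : Fin m =>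
        QuotientGroup.mk' T (PresentedGroup.of (rels := centralExtRels r i) (some k)))) =
        ((QuotientGroup.mk' T).comp (PresentedGroup.mk (centralExtRels r i))).comp
          (FreeGroup.map some) := by
      apply FreeGroup.ext_hom
      intro a
      simp
      rfl
    rw [hcomp]
    show QuotientGroup.mk' T (PresentedGroup.mk (centralExtRels r i) (FreeGroup.map some (r j))) = 1
    rw [hrel2 j, QuotientGroup.mk'_apply, QuotientGroup.eq_one_iff]
    exact zpow_mem (Subgroup.mem_zpowers t) _
  set θ : Q →* G ⧸ T := PresentedGroup.toGroup hrelsθ with hθ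
  have hιker : ∀ u : Multiplicative ℤ, π (ι u) = 1 := by
    intro u
    have : ι u ∈ π.ker := by rw [hexact]; exact ⟨u, rfl⟩
    exact this
  -- key: θ ∘ π ∘ ψ = mk' T
  have hkey : θ.comp (π.comp ψ) = QuotientGroup.mk' T := by
    apply PresentedGroup.ext
    rintro (_ | k)
    · show θ (π (ψ t)) = QuotientGroup.mk' T t
      rw [hψnone, hιker, map_one, eq_comm, QuotientGroup.mk'_apply, QuotientGroup.eq_one_iff]
      exact Subgroup.mem_zpowers t
    · show θ (π (ψ (PresentedGroup.of (some k)))) = _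
      rw [hψsome, hg]
      exact PresentedGroup.toGroup.of hrelsθ
  have hmemT : ∀ x : G, π (ψ x) = 1 → x ∈ T := by
    intro x hx
    have : QuotientGroup.mk' T x = θ (π (ψ x)) :=
      (DFunLike.congr_fun hkey x).symm
    rw [hx, map_one, QuotientGroup.mk'_apply, QuotientGroup.eq_one_iff] at this
    exact this
  have hψt : ∀ n : ℤ, ψ (t ^ n) = ι (Multiplicative.ofAdd n) := by
    intro n
    rw [map_zpow, hψnone, hιpow]
  -- injectivity
  have hinj : Function.Injective ψ := by
    rw [injective_iff_map_eq_one]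
    intro x hx
    have hxT := hmemT x (by rw [hx, map_one])
    obtain ⟨n, hxn⟩ := Subgroup.mem_zpowers_iff.mp hxT
    have h3 : ι (Multiplicative.ofAdd n) = ι 1 := by
      rw [← hψt, hxn, hx, map_one]
    have hn : n = 0 := by simpa using hι h3
    rw [← hxn, hn, zpow_zero]
  -- surjectivity
  have hπψsurj : Function.Surjective (π.comp ψ) := by
    rw [← MonoidHom.range_eq_top]
    rw [eq_top_iff, ← PresentedGroup.closure_range_of (Set.range r)]
    rw [Subgroup.closure_le]
    rintro _ ⟨k, rfl⟩
    exact ⟨PresentedGroup.of (some k), by simp [hψsome, hg]⟩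
  have hsurj : Function.Surjective ψ := by
    intro γ
    obtain ⟨x, hx⟩ := hπψsurj (π γ)
    have : γ * (ψ x)⁻¹ ∈ π.ker := by
      rw [MonoidHom.mem_ker, map_mul, map_inv]
      rw [show π (ψ x) = π γ from hx]
      simp
    rw [hexact] at this
    obtain ⟨u, hu⟩ := this
    refine ⟨t ^ u.toAdd * x, ?_⟩
    rw [map_mul, hψt, ofAdd_toAdd, hu]
    group
  refine ⟨MulEquiv.ofBijective ψ ⟨hinj, hsurj⟩, ⟨Multiplicative.ofAdd 1, Or.inl rfl, hψnone⟩,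
    fun k => ?_⟩
  show π (ψ (PresentedGroup.of (some k))) = _
  rw [hψsome, hg]
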